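/- Let f₁,…,f_k ∈ H(n,d) and let v₁,…,v_m ∈ ℝⁿ∖{0} be pairwise non-proportional points such that the common real zeros of f₁,…,f_k in ℝⁿ∖{0} are exactly the real scalar multiples of the v_i. Suppose s ∈ ℝ^m has all coordinates strictly positive and there exists p ∈ H(n,2d) with p(v_i) = s_i for all i. Then there exists a nonnegative form p̄ ∈ P(n,2d) with p̄(v_i) = s_i for all i. (In other words, the intersection of the image of H(n,2d) under evaluation at the v_i with the open positive orthant is contained in the image of P(n,2d).) -/

import Mathlib

open MvPolynomial

lemma eval_smul_of_isHomogeneous {n N : ℕ} {φ : MvPolynomial (Fin n) ℝ}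
    (hφ : φ.IsHomogeneous N) (c : ℝ) (x : Fin n → ℝ) :
    eval (c • x) φ = c ^ N * eval x φ := by
  rw [eval_eq, eval_eq, Finset.mul_sum]
  apply Finset.sum_congr rfl
  intro e he
  have hdeg : ∑ i ∈ e.support, e i = N := by
    have := hφ (MvPolynomial.mem_support_iff.mp he)
    simpa [Finsupp.weight_apply, Finsupp.sum] using this
  rw [← hdeg]
  simp only [Pi.smul_apply, smul_eq_mul, mul_pow, Finset.prod_mul_distrib,
    Finset.prod_pow_eq_pow_sum]
  ring

theorem stmt_10
    (n d k m : ℕ) (hn : 0 < n) (hd : 0 < d)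
    (f : Fin k → MvPolynomial (Fin n) ℝ)
    (hf : ∀ i, (f i).IsHomogeneous d)
    (v : Fin m → Fin n → ℝ)
    (hv0 : ∀ i, v i ≠ 0)
    (hvprop : ∀ i j, i ≠ j → ∀ c : ℝ, v i ≠ c • v j)
    (hzeros : ∀ x : Fin n → ℝ, x ≠ 0 →
      ((∀ i, eval x (f i) = 0) ↔ ∃ (j : Fin m) (c : ℝ), x = c • v j))
    (s : Fin m → ℝ) (hs : ∀ i, 0 < s i)
    (p : MvPolynomial (Fin n) ℝ)
    (hp_hom : p.IsHomogeneous (2 * d))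
    (hp_val : ∀ i, eval (v i) p = s i) :
    ∃ pb : MvPolynomial (Fin n) ℝ, pb.IsHomogeneous (2 * d) ∧
      (∀ x : Fin n → ℝ, 0 ≤ eval x pb) ∧ ∀ i, eval (v i) pb = s i := by
  classical
  set g : MvPolynomial (Fin n) ℝ := ∑ i, (f i) ^ 2 with hgdef
  have hg_hom : g.IsHomogeneous (2 * d) := by
    apply IsHomogeneous.sum
    intro i _
    have h := (hf i).mul (hf i)
    rw [sq]
    convert h using 1
    ring
  have hg_eval : ∀ x : Fin n → ℝ, eval x g = ∑ i, (eval x (f i)) ^ 2 := by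
    intro x; simp [hgdef]
  have hg_nonneg : ∀ x, 0 ≤ eval x g := by
    intro x; rw [hg_eval]; positivity
  have hg_zero_v : ∀ i, eval (v i) g = 0 := by
    intro i
    rw [hg_eval]
    apply Finset.sum_eq_zero
    intro j _
    have hz : ∀ j, eval (v i) (f j) = 0 :=
      (hzeros (v i) (hv0 i)).mpr ⟨i, 1, (one_smul _ _).symm⟩
    simp [hz j]
  -- a point on the sphere where g vanishes has p-value > 0
  have hpos : ∀ x : Fin n → ℝ, x ≠ 0 → eval x g = 0 → 0 < eval x p := by
    intro x hx hgx
    have hz : ∀ i, eval x (f i) = 0 := by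
      intro i
      rw [hg_eval] at hgx
      have := (Finset.sum_eq_zero_iff_of_nonneg (by intro j _; positivity)).mp hgx i
        (Finset.mem_univ i)
      exact pow_eq_zero_iff (by norm_num) |>.mp this
    obtain ⟨j, c, hc⟩ := (hzeros x hx).mp hz
    have hc0 : c ≠ 0 := by
      rintro rfl; apply hx; simpa using hc
    rw [hc, eval_smul_of_isHomogeneous hp_hom, hp_val]
    have : 0 < c ^ (2 * d) := by
      rw [pow_mul]
      exact pow_pos (by positivity) d
    exact mul_pos this (hs j)
  -- key compactness step
  have key : ∃ t : ℝ, 0 ≤ t ∧ ∀ x ∈ Metric.sphere (0 : Fin n → ℝ) 1,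
      0 ≤ eval x p + t * eval x g := by
    set T : Set (Fin n → ℝ) := Metric.sphere 0 1 ∩ {x | eval x p ≤ 0} with hTdef
    have hTc : IsCompact T :=
      (isCompact_sphere 0 1).inter_right
        (isClosed_le (MvPolynomial.continuous_eval (p := p)) continuous_const)
    rcases T.eq_empty_or_nonempty with hT | hT
    · refine ⟨0, le_refl 0, fun x hx => ?_⟩
      have hxT : x ∉ T := by rw [hT]; exact Set.notMem_empty x
      have : ¬ eval x p ≤ 0 := fun h => hxT ⟨hx, h⟩
      push_neg at this
      nlinarith
    · obtain ⟨a, haT, ha⟩ := hTc.exists_isMinOn hT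
        ((MvPolynomial.continuous_eval (p := g)).continuousOn)
      obtain ⟨b, hbT, hb⟩ := hTc.exists_isMinOn hT
        ((MvPolynomial.continuous_eval (p := p)).continuousOn)
      set ε := eval a g with hε
      set μ := eval b p with hμ
      have ha0 : a ≠ 0 := by
        intro h
        have := haT.1
        rw [h] at this
        simp at this
      have hεpos : 0 < ε := by
        rcases lt_or_eq_of_le (hg_nonneg a) with h | h
        · exact h
        · exfalso
          have h1 := hpos a ha0 h.symm
          have h2 : eval a p ≤ 0 := haT.2
          linarith
      have hμle : μ ≤ 0 := hbT.2
      refine ⟨(-μ) / ε, div_nonneg (neg_nonneg.mpr hμle) hεpos.le, fun x hx => ?_⟩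
      by_cases hxp : eval x p ≤ 0
      · have hxT : x ∈ T := ⟨hx, hxp⟩
        have h1 : ε ≤ eval x g := ha hxT
        have h2 : μ ≤ eval x p := hb hxT
        have h3 : (-μ) / ε * ε ≤ (-μ) / ε * eval x g := by
          apply mul_le_mul_of_nonneg_left h1 (div_nonneg (neg_nonneg.mpr hμle) hεpos.le)
        have h4 : (-μ) / ε * ε = -μ := by field_simp
        linarith
      · push_neg at hxp
        have : 0 ≤ (-μ) / ε * eval x g :=
          mul_nonneg (div_nonneg (neg_nonneg.mpr hμle) hεpos.le) (hg_nonneg x)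
        linarith
  obtain ⟨t, ht0, ht⟩ := key
  refine ⟨p + C t * g, ?_, ?_, ?_⟩
  · exact hp_hom.add (by simpa using (isHomogeneous_C (Fin n) t).mul hg_hom)
  · intro x
    have hpb_hom : (p + C t * g).IsHomogeneous (2 * d) :=
      hp_hom.add (by simpa using (isHomogeneous_C (Fin n) t).mul hg_hom)
    by_cases hx : x = 0
    · subst hx
      have h0 : (0 : Fin n → ℝ) = (0 : ℝ) • (0 : Fin n → ℝ) := by simp
      rw [h0, eval_smul_of_isHomogeneous hpb_hom]
      rw [zero_pow (by omega : 2 * d ≠ 0)]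
      simp
    · have hxn : 0 < ‖x‖ := norm_pos_iff.mpr hx
      set u : Fin n → ℝ := ‖x‖⁻¹ • x with hu
      have hun : u ∈ Metric.sphere (0 : Fin n → ℝ) 1 := by
        simp only [Metric.mem_sphere, dist_zero_right, hu, norm_smul, norm_inv, norm_norm]
        field_simp
      have hxu : x = ‖x‖ • u := by
        rw [hu, smul_smul]
        field_simp
        rw [one_smul]
      rw [hxu, eval_smul_of_isHomogeneous hpb_hom]
      have h1 : 0 ≤ eval u p + t * eval u g := ht u hun
      have h2 : eval u (p + C t * g) = eval u p + t * eval u g := by simp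
      rw [h2]
      positivity
  · intro i
    simp [hp_val i, hg_zero_v i]
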